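/- Let Γ ⊆ ℂ^g be an R-submodule of ℂ^g (under coordinatewise multiplication by elements of R) which is a ℤ-lattice in ℂ^g ≅ ℝ^{2g} (discrete and spanning over ℝ). Let h : ℂ^g × ℂ^g → ℂ be a positive definite hermitian form (ℂ-linear in the first variable, conjugate-linear in the second, h(w,v) = conj(h(v,w)), and h(v,v) > 0 for v ≠ 0) such that Im h(γ,γ') ∈ ℤ for all γ, γ' ∈ Γ. Then: (i) α_R·h(γ,γ') ∈ R for all γ, γ' ∈ Γ; and (ii) {v ∈ ℂ^g : Im h(v,γ) ∈ ℤ for all γ ∈ Γ} = {v ∈ ℂ^g : α_R·h(v,γ) ∈ R for all γ ∈ Γ}. -/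
import Mathlib


open NumberField

private lemma quad_rel_aux (ρ : ℂ) (hi : IsIntegral ℤ ρ) (hdeg : (minpoly ℚ ρ).natDegree ≤ 2)
    (him : ρ.im ≠ 0) : ∃ b c : ℤ, ρ ^ 2 + b * ρ + c = 0 := by
  have hmap : minpoly ℚ ρ = (minpoly ℤ ρ).map (algebraMap ℤ ℚ) :=
    minpoly.isIntegrallyClosed_eq_field_fractions' ℚ hi
  have hnd : (minpoly ℤ ρ).natDegree ≤ 2 := by
    rwa [hmap, Polynomial.natDegree_map_eq_of_injective
      (fun a b hab => by exact_mod_cast hab : Function.Injective (algebraMap ℤ ℚ))] at hdeg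
  have hposd : 0 < (minpoly ℤ ρ).natDegree := minpoly.natDegree_pos hi
  have hmonic := minpoly.monic hi
  have haev := minpoly.aeval ℤ ρ
  rw [Polynomial.aeval_eq_sum_range] at haev
  interval_cases hd : (minpoly ℤ ρ).natDegree
  · exfalso
    have hlc : (minpoly ℤ ρ).coeff 1 = 1 := by
      have := hmonic.coeff_natDegree; rwa [hd] at this
    simp only [Finset.sum_range_succ, Finset.sum_range_one, hlc, pow_zero, pow_one,
      zsmul_eq_mul, one_smul, Int.cast_one, mul_one, one_mul] at haev
    have hρeq : ρ = -((minpoly ℤ ρ).coeff 0 : ℂ) := by push_cast at haev ⊢; linear_combination haev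
    apply him
    rw [hρeq]
    simp
  · have hlc : (minpoly ℤ ρ).coeff 2 = 1 := by
      have := hmonic.coeff_natDegree; rwa [hd] at this
    refine ⟨(minpoly ℤ ρ).coeff 1, (minpoly ℤ ρ).coeff 0, ?_⟩
    simp only [Finset.sum_range_succ, Finset.sum_range_one, hlc, pow_zero, pow_one,
      zsmul_eq_mul, one_smul, Int.cast_one, mul_one, one_mul] at haev
    push_cast at haev ⊢
    linear_combination haev

/-- Let `Γ ⊆ ℂ^g` be an `R`-submodule (coordinatewise multiplication,
`R = τ(𝓞 K)`) which is a `ℤ`-lattice, and let `h` be a positive definite hermitian form with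
`Im h(γ, γ') ∈ ℤ` on `Γ`.  Then (i) `α_R · h(γ, γ') ∈ R` for all `γ, γ' ∈ Γ`, and
(ii) the dual lattice conditions `Im h(v, γ) ∈ ℤ` and `α_R · h(v, γ) ∈ R` agree. -/
theorem stmt_6
    (K : Type*) [Field K] [NumberField K]
    (hdeg : Module.finrank ℚ K = 2)
    (hcplx : IsEmpty (K →+* ℝ))
    (τ : K →+* ℂ)
    (R : Set ℂ) (hR : R = Set.range fun a : 𝓞 K => τ (algebraMap (𝓞 K) K a))
    (ω : 𝓞 K) (hω : Algebra.adjoin ℤ ({ω} : Set (𝓞 K)) = ⊤)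
    (αR : ℝ) (hα : αR = (τ (algebraMap (𝓞 K) K ω)).im) (hαpos : 0 < αR)
    (g : ℕ)
    (Γ : AddSubgroup (Fin g → ℂ))
    (hmod : ∀ r ∈ R, ∀ γ ∈ Γ, (fun i => r * γ i) ∈ Γ)
    (hdisc : DiscreteTopology Γ)
    (hspan : Submodule.span ℝ (Γ : Set (Fin g → ℂ)) = ⊤)
    (h : (Fin g → ℂ) → (Fin g → ℂ) → ℂ)
    (hlin₁ : ∀ (c : ℂ) (v v' w : Fin g → ℂ), h (c • v + v') w = c * h v w + h v' w)
    (hlin₂ : ∀ (c : ℂ) (v w w' : Fin g → ℂ),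
      h v (c • w + w') = starRingEnd ℂ c * h v w + h v w')
    (hsymm : ∀ v w, h w v = starRingEnd ℂ (h v w))
    (hpos : ∀ v, v ≠ 0 → 0 < (h v v).re)
    (hint : ∀ γ ∈ Γ, ∀ γ' ∈ Γ, ∃ n : ℤ, (h γ γ').im = n) :
    (∀ γ ∈ Γ, ∀ γ' ∈ Γ, (αR : ℂ) * h γ γ' ∈ R) ∧
    {v : Fin g → ℂ | ∀ γ ∈ Γ, ∃ n : ℤ, (h v γ).im = n} =
      {v : Fin g → ℂ | ∀ γ ∈ Γ, (αR : ℂ) * h v γ ∈ R} := by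
  subst hR
  set ρ : ℂ := τ (algebraMap (𝓞 K) K ω) with hρ
  subst hα
  have him : ρ.im ≠ 0 := ne_of_gt hαpos
  -- basic facts about h
  have h0₂ : ∀ v, h v 0 = 0 := by
    intro v
    have h1 := hlin₂ 1 v 0 0
    simp only [one_smul, add_zero, map_one, one_mul] at h1
    exact left_eq_add.mp h1
  have hsm₂ : ∀ (c : ℂ) (v w : Fin g → ℂ), h v (c • w) = starRingEnd ℂ c * h v w := by
    intro c v w
    have := hlin₂ c v w 0
    simpa [h0₂] using this
  -- the quadratic relation for ρ
  have hiρ : IsIntegral ℤ ρ := (RingOfIntegers.isIntegral_coe ω).map τ.toIntAlgHom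
  have hd2 : (minpoly ℚ ρ).natDegree ≤ 2 := by
    rw [hρ]
    have heq : minpoly ℚ (τ (algebraMap (𝓞 K) K ω)) = minpoly ℚ (algebraMap (𝓞 K) K ω) :=
      minpoly.algHom_eq τ.toRatAlgHom τ.injective _
    rw [heq]
    calc (minpoly ℚ (algebraMap (𝓞 K) K ω)).natDegree ≤ Module.finrank ℚ K :=
          minpoly.natDegree_le _
      _ = 2 := hdeg
  obtain ⟨b, c, hbc⟩ := quad_rel_aux ρ hiρ hd2 him
  -- every element of R is p + q ρ
  have repR : ∀ x : 𝓞 K, ∃ p q : ℤ, τ (algebraMap (𝓞 K) K x) = p + q * ρ := by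
    intro x
    have hx : x ∈ Algebra.adjoin ℤ ({ω} : Set (𝓞 K)) := hω ▸ Algebra.mem_top
    refine Algebra.adjoin_induction ?_ ?_ ?_ ?_ hx
    · rintro y hy
      rw [Set.mem_singleton_iff] at hy
      subst hy
      exact ⟨0, 1, by push_cast; ring⟩
    · intro r
      refine ⟨r, 0, ?_⟩
      push_cast
      try simp
      try ring
    · rintro x y - - ⟨p, q, hpq⟩ ⟨p', q', hpq'⟩
      exact ⟨p + p', q + q', by rw [map_add, map_add, hpq, hpq']; push_cast; ring⟩
    · rintro x y - - ⟨p, q, hpq⟩ ⟨p', q', hpq'⟩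
      refine ⟨p * p' - c * (q * q'), p * q' + p' * q - b * (q * q'), ?_⟩
      rw [map_mul, map_mul, hpq, hpq']
      push_cast
      linear_combination (q * q' : ℂ) * hbc
  -- scalar multiplication by ρ preserves Γ
  have hsc : ∀ γ ∈ Γ, ρ • γ ∈ Γ := by
    intro γ hγ
    exact hmod ρ ⟨ω, rfl⟩ γ hγ
  -- the main computation
  have main : ∀ v, (∀ γ ∈ Γ, ∃ n : ℤ, (h v γ).im = n) → ∀ γ ∈ Γ,
      ((ρ.im : ℂ) * h v γ) ∈ Set.range fun a : 𝓞 K => τ (algebraMap (𝓞 K) K a) := by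
    intro v hv γ hγ
    obtain ⟨m, hm⟩ := hv γ hγ
    obtain ⟨n, hn⟩ := hv (ρ • γ) (hsc γ hγ)
    rw [hsm₂] at hn
    refine ⟨(-n : ℤ) + (m : ℤ) * ω, ?_⟩
    have hτ : τ (algebraMap (𝓞 K) K ((-n : ℤ) + (m : ℤ) * ω)) = (-n : ℂ) + (m : ℂ) * ρ := by
      rw [map_add, map_add, map_mul, map_mul, map_intCast, map_intCast, map_intCast,
        map_intCast]
      push_cast
      ring
    show τ (algebraMap (𝓞 K) K ((-n : ℤ) + (m : ℤ) * ω)) = (ρ.im : ℂ) * h v γ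
    rw [hτ]
    have hn' : ρ.re * (h v γ).im - ρ.im * (h v γ).re = n := by
      rw [← hn]
      simp [Complex.mul_im, Complex.conj_re, Complex.conj_im]
      ring
    apply Complex.ext
    · simp only [Complex.add_re, Complex.mul_re, Complex.neg_re, Complex.intCast_re,
        Complex.intCast_im, Complex.ofReal_re, Complex.ofReal_im, Complex.neg_im]
      rw [hm] at hn' ⊢
      ring_nf
      ring_nf at hn'
      linarith
    · simp only [Complex.add_im, Complex.mul_im, Complex.neg_im, Complex.intCast_re,
        Complex.intCast_im, Complex.ofReal_re, Complex.ofReal_im]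
      rw [hm]
      ring
  refine ⟨fun γ hγ γ' hγ' => main γ (hint γ hγ) γ' hγ', ?_⟩
  ext v
  simp only [Set.mem_setOf_eq]
  constructor
  · intro hv γ hγ
    exact main v hv γ hγ
  · intro hv γ hγ
    obtain ⟨x, hx⟩ := hv γ hγ
    obtain ⟨p, q, hpq⟩ := repR x
    refine ⟨q, ?_⟩
    have hx' : τ (algebraMap (𝓞 K) K x) = (ρ.im : ℂ) * h v γ := hx
    have him' : ((ρ.im : ℂ) * h v γ).im = ((p : ℂ) + q * ρ).im := by
      rw [← hx', hpq]
    have h1 : ρ.im * (h v γ).im = q * ρ.im := by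
      simpa [Complex.mul_im, Complex.add_im] using him'
    have := mul_left_cancel₀ him (by linarith [h1] : ρ.im * (h v γ).im = ρ.im * q)
    exact this
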